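/- For every x > 0 and λ > 0, one has ∫_0^∞ e^{-λt} (x/t) e^{-x²/(4t)}/√(4πt) dt = e^{-x√λ}. -/

import Mathlib

open MeasureTheory Real Set Filter Topology

lemma glasser_image (a : ℝ) (ha : 0 < a) :
    (fun u : ℝ => u - a / u) '' Ioi 0 = univ := by
  ext s
  simp only [mem_image, mem_Ioi, mem_univ, iff_true]
  set r := Real.sqrt (s ^ 2 + 4 * a) with hr
  have hr2 : r ^ 2 = s ^ 2 + 4 * a := Real.sq_sqrt (by positivity)
  have hrnn : 0 ≤ r := Real.sqrt_nonneg _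
  have hrs : -s < r := by nlinarith [sq_nonneg (r + s)]
  have h0 : (0:ℝ) < (s + r) / 2 := by linarith
  refine ⟨(s + r) / 2, h0, ?_⟩
  have h0' : (s + r) / 2 ≠ 0 := ne_of_gt h0
  have hd : a / ((s + r) / 2) = (r - s) / 2 := by
    rw [div_eq_iff h0']
    nlinarith [hr2]
  rw [hd]
  ring

lemma glasser_deriv (a : ℝ) {u : ℝ} (hu : u ∈ Ioi (0:ℝ)) :
    HasDerivWithinAt (fun u : ℝ => u - a / u) (1 + a / u ^ 2) (Ioi 0) u := by
  have hu' : u ≠ 0 := ne_of_gt hu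
  have h : HasDerivAt (fun u : ℝ => u - a / u) (1 + a / u ^ 2) u := by
    have h1 : HasDerivAt (fun u : ℝ => a / u) (a * (-(u ^ 2)⁻¹)) u := by
      simpa [div_eq_mul_inv] using (hasDerivAt_inv hu').const_mul a
    have := (hasDerivAt_id u).sub h1
    exact this.congr_deriv (by ring)
  exact h.hasDerivWithinAt

lemma glasser_inj (a : ℝ) (ha : 0 < a) : InjOn (fun u : ℝ => u - a / u) (Ioi 0) := by
  apply StrictMonoOn.injOn
  intro u hu v hv huv
  simp only [mem_Ioi] at hu hv
  have : a / v < a / u := div_lt_div_of_pos_left ha hu huv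
  simp only
  linarith

lemma glasser_integrable (a : ℝ) (ha : 0 < a) :
    IntegrableOn (fun u : ℝ => (1 + a / u ^ 2) * Real.exp (-(u - a / u) ^ 2)) (Ioi 0) := by
  have h := (integrableOn_image_iff_integrableOn_abs_deriv_smul measurableSet_Ioi
      (fun u hu => glasser_deriv a hu) (glasser_inj a ha)
      (fun s => Real.exp (-s ^ 2))).mp ?_
  · refine h.congr_fun (fun u hu => ?_) measurableSet_Ioi
    have hu0 : (0:ℝ) < u := hu
    have : |1 + a / u ^ 2| = 1 + a / u ^ 2 := abs_of_pos (by positivity)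
    simp [this, smul_eq_mul]
  · rw [glasser_image a ha]
    have : Integrable (fun s : ℝ => Real.exp (-s ^ 2)) := by
      simpa using integrable_exp_neg_mul_sq (b := 1) one_pos
    simpa [IntegrableOn, Measure.restrict_univ] using this

lemma glasser_swap (a : ℝ) (ha : 0 < a) :
    ∫ u in Ioi (0:ℝ), Real.exp (-(u - a / u) ^ 2)
      = ∫ u in Ioi (0:ℝ), (a / u ^ 2) * Real.exp (-(u - a / u) ^ 2) := by
  have himg : (fun u : ℝ => a / u) '' Ioi 0 = Ioi 0 := by
    ext t
    simp only [mem_image, mem_Ioi]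
    constructor
    · rintro ⟨u, hu, rfl⟩; positivity
    · intro ht; exact ⟨a / t, by positivity, by field_simp⟩
  have hderiv : ∀ u ∈ Ioi (0:ℝ),
      HasDerivWithinAt (fun u : ℝ => a / u) (-(a / u ^ 2)) (Ioi 0) u := by
    intro u hu
    have hu' : u ≠ 0 := ne_of_gt hu
    have : HasDerivAt (fun u : ℝ => a / u) (a * (-(u ^ 2)⁻¹)) u := by
      simpa [div_eq_mul_inv] using (hasDerivAt_inv hu').const_mul a
    exact (this.congr_deriv (by ring)).hasDerivWithinAt
  have hinj : InjOn (fun u : ℝ => a / u) (Ioi 0) := by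
    apply StrictAntiOn.injOn
    intro u hu v hv huv
    simp only [mem_Ioi] at hu hv
    exact div_lt_div_of_pos_left ha hu huv
  have := integral_image_eq_integral_abs_deriv_smul measurableSet_Ioi hderiv hinj
    (fun s => Real.exp (-(s - a / s) ^ 2))
  rw [himg] at this
  rw [this]
  refine setIntegral_congr_fun measurableSet_Ioi (fun u hu => ?_)
  have hu0 : (0:ℝ) < u := hu
  have h1 : |-(a / u ^ 2)| = a / u ^ 2 := by
    rw [abs_neg]; exact abs_of_pos (by positivity)
  have h2 : a / (a / u) = u := by field_simp
  have h3 : (a / u - u) ^ 2 = (u - a / u) ^ 2 := by ring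
  simp [h1, h2, h3, smul_eq_mul]

lemma glasser (a : ℝ) (ha : 0 < a) :
    ∫ u in Ioi (0:ℝ), Real.exp (-(u - a / u) ^ 2) = Real.sqrt Real.pi / 2 := by
  have key := integral_image_eq_integral_abs_deriv_smul measurableSet_Ioi
    (fun u hu => glasser_deriv a hu) (glasser_inj a ha) (fun s => Real.exp (-s ^ 2))
  rw [glasser_image a ha] at key
  have hg : ∫ s in (univ : Set ℝ), Real.exp (-s ^ 2) = Real.sqrt Real.pi := by
    rw [Measure.restrict_univ]
    simpa using integral_gaussian 1
  rw [hg] at key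
  have hI := glasser_integrable a ha
  have hE : IntegrableOn (fun u : ℝ => Real.exp (-(u - a / u) ^ 2)) (Ioi 0) := by
    have hm : Measurable fun u : ℝ => Real.exp (-(u - a / u) ^ 2) :=
      Real.measurable_exp.comp
        (((measurable_id.sub (measurable_const.div measurable_id)).pow_const 2).neg)
    refine Integrable.mono hI hm.aestronglyMeasurable ?_
    filter_upwards [ae_restrict_mem measurableSet_Ioi] with u hu
    have hu0 : (0:ℝ) < u := hu
    have he : 0 < Real.exp (-(u - a / u) ^ 2) := Real.exp_pos _
    have h1 : (1:ℝ) ≤ 1 + a / u ^ 2 := by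
      have : 0 < a / u ^ 2 := by positivity
      linarith
    rw [Real.norm_eq_abs, abs_of_pos he, Real.norm_eq_abs,
      abs_of_pos (by nlinarith : (0:ℝ) < (1 + a / u ^ 2) * Real.exp (-(u - a / u) ^ 2))]
    nlinarith
  have hE2 : IntegrableOn (fun u : ℝ => (a / u ^ 2) * Real.exp (-(u - a / u) ^ 2)) (Ioi 0) := by
    refine (hI.sub hE).congr ?_
    filter_upwards with u
    simp only [Pi.sub_apply]
    ring
  have hsplit : ∫ u in Ioi (0:ℝ), |1 + a / u ^ 2| • Real.exp (-((fun u : ℝ => u - a / u) u) ^ 2)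
      = (∫ u in Ioi (0:ℝ), Real.exp (-(u - a / u) ^ 2))
        + ∫ u in Ioi (0:ℝ), (a / u ^ 2) * Real.exp (-(u - a / u) ^ 2) := by
    rw [← integral_add hE hE2]
    refine setIntegral_congr_fun measurableSet_Ioi (fun u hu => ?_)
    have hu0 : (0:ℝ) < u := hu
    have : |1 + a / u ^ 2| = 1 + a / u ^ 2 := abs_of_pos (by positivity)
    simp only [smul_eq_mul, this]
    ring
  rw [hsplit, ← glasser_swap a ha] at key
  linarith

theorem laplace_heat_kernel_hitting (x l : ℝ) (hx : 0 < x) (hl : 0 < l) :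
    ∫ t in Ioi (0:ℝ),
        Real.exp (-l * t) * ((x / t) * (Real.exp (-x ^ 2 / (4 * t)) / Real.sqrt (4 * Real.pi * t)))
      = Real.exp (-x * Real.sqrt l) := by
  set a : ℝ := x * Real.sqrt l / 2 with ha_def
  have hsl : 0 < Real.sqrt l := Real.sqrt_pos.mpr hl
  have ha : 0 < a := by positivity
  have ha2 : a ^ 2 = l * x ^ 2 / 4 := by
    rw [ha_def]; rw [div_pow, mul_pow, Real.sq_sqrt hl.le]; ring
  -- substitution φ u = x^2 / (4 u^2)
  have himg : (fun u : ℝ => x ^ 2 / (4 * u ^ 2)) '' Ioi 0 = Ioi 0 := by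
    ext t
    simp only [mem_image, mem_Ioi]
    constructor
    · rintro ⟨u, hu, rfl⟩; positivity
    · intro ht
      refine ⟨x / (2 * Real.sqrt t), by positivity, ?_⟩
      have hst : Real.sqrt t ^ 2 = t := Real.sq_sqrt ht.le
      have hst0 : Real.sqrt t ≠ 0 := by positivity
      field_simp
      nlinarith [hst]
  have hderiv : ∀ u ∈ Ioi (0:ℝ),
      HasDerivWithinAt (fun u : ℝ => x ^ 2 / (4 * u ^ 2)) (-(x ^ 2 / (2 * u ^ 3))) (Ioi 0) u := by
    intro u hu
    have hu' : u ≠ 0 := ne_of_gt hu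
    have h1 : HasDerivAt (fun u : ℝ => (u ^ 2)⁻¹) (-(2 * u) / (u ^ 2) ^ 2) u := by
      refine HasDerivAt.inv ?_ (pow_ne_zero 2 hu')
      simpa using (hasDerivAt_pow 2 u)
    have h2 := h1.const_mul (x ^ 2 / 4)
    have heq : (fun u : ℝ => x ^ 2 / (4 * u ^ 2)) = fun u : ℝ => x ^ 2 / 4 * (u ^ 2)⁻¹ := by
      funext v; ring
    rw [heq]
    refine (h2.congr_deriv ?_).hasDerivWithinAt
    field_simp
    ring
  have hinj : InjOn (fun u : ℝ => x ^ 2 / (4 * u ^ 2)) (Ioi 0) := by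
    apply StrictAntiOn.injOn
    intro u hu v hv huv
    simp only [mem_Ioi] at hu hv
    exact div_lt_div_of_pos_left (by positivity) (by positivity) (by nlinarith)
  have key := integral_image_eq_integral_abs_deriv_smul measurableSet_Ioi hderiv hinj
    (fun t => Real.exp (-l * t) *
      ((x / t) * (Real.exp (-x ^ 2 / (4 * t)) / Real.sqrt (4 * Real.pi * t))))
  rw [himg] at key
  rw [key]
  have hrw : ∀ u ∈ Ioi (0:ℝ),
      |(-(x ^ 2 / (2 * u ^ 3)))| • ((fun t => Real.exp (-l * t) *
        ((x / t) * (Real.exp (-x ^ 2 / (4 * t)) / Real.sqrt (4 * Real.pi * t))))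
          (x ^ 2 / (4 * u ^ 2)))
      = (2 / Real.sqrt Real.pi * Real.exp (-(2 * a))) * Real.exp (-(u - a / u) ^ 2) := by
    intro u hu
    have hu0 : (0:ℝ) < u := hu
    have hu' : u ≠ 0 := ne_of_gt hu0
    have habs : |(-(x ^ 2 / (2 * u ^ 3)))| = x ^ 2 / (2 * u ^ 3) := by
      rw [abs_neg]; exact abs_of_pos (by positivity)
    simp only [smul_eq_mul, habs]
    have hsqrt : Real.sqrt (4 * Real.pi * (x ^ 2 / (4 * u ^ 2)))
        = Real.sqrt Real.pi * (x / u) := by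
      have : 4 * Real.pi * (x ^ 2 / (4 * u ^ 2)) = Real.pi * (x / u) ^ 2 := by
        field_simp
      rw [this, Real.sqrt_mul Real.pi_pos.le, Real.sqrt_sq (by positivity)]
    rw [hsqrt]
    have hexp1 : -l * (x ^ 2 / (4 * u ^ 2)) = -(a ^ 2 / u ^ 2) := by
      rw [ha2]; field_simp
    have hexp2 : -x ^ 2 / (4 * (x ^ 2 / (4 * u ^ 2))) = -u ^ 2 := by
      field_simp
    have hx1 : x / (x ^ 2 / (4 * u ^ 2)) = 4 * u ^ 2 / x := by
      field_simp
    rw [hexp1, hexp2, hx1]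
    have hsum : Real.exp (-(a ^ 2 / u ^ 2)) * Real.exp (-u ^ 2)
        = Real.exp (-(2 * a)) * Real.exp (-(u - a / u) ^ 2) := by
      rw [← Real.exp_add, ← Real.exp_add]
      congr 1
      field_simp
      ring
    have hre : x ^ 2 / (2 * u ^ 3) * (Real.exp (-(a ^ 2 / u ^ 2)) * (4 * u ^ 2 / x *
          (Real.exp (-u ^ 2) / (Real.sqrt Real.pi * (x / u)))))
        = (x ^ 2 / (2 * u ^ 3) * (4 * u ^ 2 / x) / (Real.sqrt Real.pi * (x / u))) *
          (Real.exp (-(a ^ 2 / u ^ 2)) * Real.exp (-u ^ 2)) := by ring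
    rw [hre, hsum]
    have hπ : Real.sqrt Real.pi ≠ 0 := by positivity
    field_simp
    ring
  rw [setIntegral_congr_fun measurableSet_Ioi hrw, integral_const_mul, glasser a ha]
  rw [show -x * Real.sqrt l = -(2 * a) by rw [ha_def]; ring]
  have hπ : Real.sqrt Real.pi ≠ 0 := by positivity
  field_simp
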